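/- arXiv:1406.5875 — 2 statements merged into one kernel-verified Lean document; each statement's English description precedes it below -/
import Mathlib

section
/- Let n ∈ ℕ and let He_n denote the probabilists' Hermite polynomial of degree n (Mathlib's Polynomial.hermite n). Define u : ℝ → ℝ by u(x) = exp(−x²/2) · He_n(√2 · x). Then u is twice differentiable and for every x ∈ ℝ: −(1/2) u''(x) + (x²/2) u(x) = (n + 1/2) u(x). -/
open Polynomial in
lemma derivative_hermite_succ (n : ℕ) :
    derivative (hermite (n + 1)) = (n + 1 : ℕ) • hermite n := by
  induction n with
  | zero => simp [hermite_one, hermite_zero]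
  | succ n ih =>
    rw [hermite_succ (n + 1), derivative_sub, derivative_mul, derivative_X, one_mul, ih,
      derivative_smul, mul_smul_comm, add_sub_assoc, ← smul_sub, ← hermite_succ n]
    simp only [succ_nsmul, nsmul_eq_mul, Nat.cast_add, Nat.cast_one]
    ring

open Polynomial in
lemma hermite_ode (n : ℕ) :
    derivative (derivative (hermite n)) =
      X * derivative (hermite n) - (n : ℕ) • hermite n := by
  cases n with
  | zero => simp [hermite_zero]
  | succ n =>
    rw [derivative_hermite_succ, derivative_smul, hermite_succ, mul_smul_comm, smul_sub]
    abel

/-- The Hermite function `exp(−x²/2) Hₙ(x) = exp(−x²/2) Heₙ(√2 x)` (up to the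
constant `2^{n/2}`) is an eigenfunction of the harmonic oscillator Hamiltonian
`−(1/2) d²/dx² + x²/2` with eigenvalue `n + 1/2`. -/
theorem hermite_function_eigenfunction
    (n : ℕ) (u : ℝ → ℝ)
    (hu : ∀ x : ℝ,
      u x = Real.exp (-x ^ 2 / 2) * Polynomial.aeval (Real.sqrt 2 * x) (Polynomial.hermite n)) :
    (Differentiable ℝ u ∧ Differentiable ℝ (deriv u)) ∧
      ∀ x : ℝ,
        -(1 / 2) * deriv (deriv u) x + x ^ 2 / 2 * u x = ((n : ℝ) + 1 / 2) * u x := by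
  have huf : u = fun x => Real.exp (-x ^ 2 / 2) *
      Polynomial.aeval (Real.sqrt 2 * x) (Polynomial.hermite n) := funext hu
  set p : Polynomial ℤ := Polynomial.hermite n with hp
  set P : ℝ → ℝ := fun y => Polynomial.aeval y p with hP
  set Q : ℝ → ℝ := fun y => Polynomial.aeval y (Polynomial.derivative p) with hQ
  -- exponential derivative
  have hexp : ∀ x : ℝ, HasDerivAt (fun x : ℝ => Real.exp (-x ^ 2 / 2))
      (-x * Real.exp (-x ^ 2 / 2)) x := by
    intro x
    have h1 : HasDerivAt (fun x : ℝ => -x ^ 2 / 2) (-x) x := by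
      have := ((hasDerivAt_pow 2 x).neg.div_const 2)
      refine this.congr_deriv ?_
      ring
    simpa [mul_comm] using h1.exp
  have hsqrt : ∀ x : ℝ, HasDerivAt (fun x : ℝ => Real.sqrt 2 * x) (Real.sqrt 2) x := by
    intro x
    simpa using (hasDerivAt_id x).const_mul (Real.sqrt 2)
  -- derivative of the polynomial part
  have hpoly : ∀ (q : Polynomial ℤ) (x : ℝ),
      HasDerivAt (fun x : ℝ => (Polynomial.aeval (Real.sqrt 2 * x) q : ℝ))
        (Real.sqrt 2 * Polynomial.aeval (Real.sqrt 2 * x) (Polynomial.derivative q)) x := by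
    intro q x
    have := (q.hasDerivAt_aeval (𝕜 := ℝ) (Real.sqrt 2 * x)).comp x (hsqrt x)
    simpa [Function.comp_def, mul_comm] using this
  -- first derivative of u
  have hu' : ∀ x : ℝ, HasDerivAt u
      (Real.exp (-x ^ 2 / 2) * (Real.sqrt 2 * Q (Real.sqrt 2 * x) - x * P (Real.sqrt 2 * x))) x := by
    intro x
    rw [huf]
    have := (hexp x).mul (hpoly p x)
    refine this.congr_deriv ?_
    simp only [hP, hQ]
    ring
  have hderiv_u : deriv u = fun x => Real.exp (-x ^ 2 / 2) *
      (Real.sqrt 2 * Q (Real.sqrt 2 * x) - x * P (Real.sqrt 2 * x)) :=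
    funext fun x => (hu' x).deriv
  -- second derivative
  have hu'' : ∀ x : ℝ, HasDerivAt (deriv u)
      ((x ^ 2 - 1 - 2 * n) * u x) x := by
    intro x
    rw [hderiv_u]
    have hQd := hpoly (Polynomial.derivative p) x
    have h2 := (hQd.const_mul (Real.sqrt 2)).sub ((hasDerivAt_id x).mul (hpoly p x))
    have := (hexp x).mul h2
    refine this.congr_deriv ?_
    -- use the polynomial ODE
    have hode : (Polynomial.aeval (Real.sqrt 2 * x)
        (Polynomial.derivative (Polynomial.derivative p)) : ℝ)
        = Real.sqrt 2 * x * Q (Real.sqrt 2 * x) - n * P (Real.sqrt 2 * x) := by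
      rw [hp, hermite_ode n]
      simp [hP, hQ, hp, nsmul_eq_mul]
    have hs2 : Real.sqrt 2 * Real.sqrt 2 = 2 := Real.mul_self_sqrt (by norm_num)
    rw [hode, hu x]
    simp only [hP, hQ, id_eq, Pi.sub_apply, Pi.mul_apply]
    linear_combination -(Real.exp (-x ^ 2 / 2) *
      ((n : ℝ) * Polynomial.aeval (Real.sqrt 2 * x) p
        - Real.sqrt 2 * x * Polynomial.aeval (Real.sqrt 2 * x) (Polynomial.derivative p))) * hs2
  have hderiv2 : deriv (deriv u) = fun x => (x ^ 2 - 1 - 2 * n) * u x :=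
    funext fun x => (hu'' x).deriv
  refine ⟨⟨fun x => (hu' x).differentiableAt, fun x => (hu'' x).differentiableAt⟩, fun x => ?_⟩
  rw [hderiv2]
  ring
end

section
/- Let α > 0, D > 0 and μ > 0 be real numbers, set ω₀ = α √(2D/μ) and ρ = 2D/ω₀. Define ψ₀ : ℝ → ℝ by ψ₀(x) = exp(−(ρ − 1/2) α x) · exp(−ρ e^{−α x}). Then ψ₀ is twice differentiable and for every x ∈ ℝ: −(1/(2μ)) ψ₀''(x) + D (1 − e^{−α x})² ψ₀(x) = (ω₀/2 − ω₀²/(16 D)) ψ₀(x). -/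
/-- The unnormalized Morse ground state `ψ₀(x) = exp(−(ρ−1/2)αx) exp(−ρ e^{−αx})`,
with `ρ = 2D/ω₀`, `ω₀ = α√(2D/μ)`, is an eigenfunction of the Morse Hamiltonian
`−(1/(2μ)) d²/dx² + D(1 − e^{−αx})²` with eigenvalue `ω₀/2 − ω₀²/(16D)`. -/
theorem morse_ground_state
    (α D μ : ℝ) (hα : 0 < α) (hD : 0 < D) (hμ : 0 < μ)
    (ω₀ ρ : ℝ) (hω₀ : ω₀ = α * Real.sqrt (2 * D / μ)) (hρ : ρ = 2 * D / ω₀)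
    (ψ₀ : ℝ → ℝ)
    (hψ₀ : ∀ x : ℝ,
      ψ₀ x = Real.exp (-(ρ - 1 / 2) * α * x) * Real.exp (-ρ * Real.exp (-α * x))) :
    (Differentiable ℝ ψ₀ ∧ Differentiable ℝ (deriv ψ₀)) ∧
      ∀ x : ℝ,
        -(1 / (2 * μ)) * deriv (deriv ψ₀) x
            + D * (1 - Real.exp (-α * x)) ^ 2 * ψ₀ x =
          (ω₀ / 2 - ω₀ ^ 2 / (16 * D)) * ψ₀ x := by
  have hψ : ψ₀ = fun x => Real.exp (-(ρ - 1 / 2) * α * x + -ρ * Real.exp (-α * x)) := by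
    funext x
    rw [hψ₀ x, ← Real.exp_add]
  -- first derivative
  have hd1 : ∀ x : ℝ, HasDerivAt ψ₀
      ((-(ρ - 1 / 2) * α + ρ * α * Real.exp (-α * x)) * ψ₀ x) x := by
    intro x
    rw [hψ]
    have h1 : HasDerivAt (fun y : ℝ => -α * y) (-α) x := by
      simpa using (hasDerivAt_id x).const_mul (-α)
    have h2 : HasDerivAt (fun y : ℝ => Real.exp (-α * y)) (Real.exp (-α * x) * (-α)) x :=
      h1.exp
    have h3 : HasDerivAt (fun y : ℝ => -ρ * Real.exp (-α * y))
        (-ρ * (Real.exp (-α * x) * (-α))) x := h2.const_mul (-ρ)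
    have h4 : HasDerivAt (fun y : ℝ => -(ρ - 1 / 2) * α * y) (-(ρ - 1 / 2) * α) x := by
      simpa [mul_assoc] using (hasDerivAt_id x).const_mul (-(ρ - 1 / 2) * α)
    have h5 := (h4.add h3).exp
    convert h5 using 1
    · rfl
    · simp only [Pi.add_apply]; ring
  have hder1 : deriv ψ₀ = fun x =>
      (-(ρ - 1 / 2) * α + ρ * α * Real.exp (-α * x)) * ψ₀ x := by
    funext x; exact (hd1 x).deriv
  -- second derivative
  have hd2 : ∀ x : ℝ, HasDerivAt (deriv ψ₀)
      ((ρ * α * (Real.exp (-α * x) * (-α))) * ψ₀ x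
        + (-(ρ - 1 / 2) * α + ρ * α * Real.exp (-α * x)) *
          ((-(ρ - 1 / 2) * α + ρ * α * Real.exp (-α * x)) * ψ₀ x)) x := by
    intro x
    rw [hder1]
    have h1 : HasDerivAt (fun y : ℝ => -α * y) (-α) x := by
      simpa using (hasDerivAt_id x).const_mul (-α)
    have h2 : HasDerivAt (fun y : ℝ => Real.exp (-α * y)) (Real.exp (-α * x) * (-α)) x :=
      h1.exp
    have h3 : HasDerivAt (fun y : ℝ => -(ρ - 1 / 2) * α + ρ * α * Real.exp (-α * y))
        (ρ * α * (Real.exp (-α * x) * (-α))) x := by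
      exact (h2.const_mul (ρ * α)).const_add (-(ρ - 1 / 2) * α)
    exact h3.mul (hd1 x)
  refine ⟨⟨fun x => (hd1 x).differentiableAt, fun x => (hd2 x).differentiableAt⟩, ?_⟩
  intro x
  have hder2 : deriv (deriv ψ₀) x =
      (ρ * α * (Real.exp (-α * x) * (-α))) * ψ₀ x
        + (-(ρ - 1 / 2) * α + ρ * α * Real.exp (-α * x)) *
          ((-(ρ - 1 / 2) * α + ρ * α * Real.exp (-α * x)) * ψ₀ x) := (hd2 x).deriv
  -- key algebraic facts
  have hωpos : 0 < ω₀ := by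
    rw [hω₀]
    positivity
  have hα2 : α ^ 2 * (2 * D) = ω₀ ^ 2 * μ := by
    rw [hω₀, mul_pow, Real.sq_sqrt (by positivity : (0:ℝ) ≤ 2 * D / μ)]
    field_simp
  have hρω : ρ * ω₀ = 2 * D := by
    rw [hρ]
    field_simp
  rw [hder2]
  set e := Real.exp (-α * x) with he
  set P := ψ₀ x with hP
  have hμ' : μ ≠ 0 := ne_of_gt hμ
  have hD' : D ≠ 0 := ne_of_gt hD
  field_simp
  linear_combination (P * (-32 * (ρ ^ 2 * (1 - e) ^ 2 - ρ + 1 / 4))) * hα2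
    + (P * (32 * μ * (ω₀ - (1 - e) ^ 2 * (ρ * ω₀ + 2 * D)))) * hρω
end
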